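/- Let P ⊆ ℝ^d be a finite nonempty set, let T ⊆ conv(P) be a finite nonempty set, and let O ⊆ conv(P) be a finite nonempty set such that every p ∈ P satisfies dist(p, conv(O)) ≤ ε. Let r = max_{p ∈ P} dist(p, conv(T)). Then there exists a point o ∈ O with r − ε ≤ dist(o, conv(T)) ≤ r; moreover, dist(o, conv(T)) ≤ r holds for every o ∈ O. -/

import Mathlib

open Metric

lemma convexOn_infDist_aux {E : Type*} [NormedAddCommGroup E] [NormedSpace ℝ E]
    {C : Set E} (hC : Convex ℝ C) (hcomp : IsCompact C) (hne : C.Nonempty) :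
    ConvexOn ℝ Set.univ (fun x => Metric.infDist x C) := by
  refine ⟨convex_univ, fun x _ y _ a b ha hb hab => ?_⟩
  obtain ⟨u, hu, hxu⟩ := hcomp.exists_infDist_eq_dist hne x
  obtain ⟨v, hv, hyv⟩ := hcomp.exists_infDist_eq_dist hne y
  have hmem : a • u + b • v ∈ C := hC hu hv ha hb hab
  calc Metric.infDist (a • x + b • y) C ≤ dist (a • x + b • y) (a • u + b • v) :=
        Metric.infDist_le_dist_of_mem hmem
    _ ≤ a * dist x u + b * dist y v := by
        rw [dist_eq_norm, dist_eq_norm, dist_eq_norm]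
        have h : a • x + b • y - (a • u + b • v) = a • (x - u) + b • (y - v) := by
          module
        rw [h]
        refine (norm_add_le _ _).trans ?_
        rw [norm_smul, norm_smul, Real.norm_eq_abs, Real.norm_eq_abs,
          abs_of_nonneg ha, abs_of_nonneg hb]
    _ = a * Metric.infDist x C + b * Metric.infDist y C := by rw [hxu, hyv]

theorem opt_point_in_shadow
    (d : ℕ) (P T O : Finset (EuclideanSpace ℝ (Fin d)))
    (hP : P.Nonempty) (hT : T.Nonempty) (hO : O.Nonempty)
    (hTP : (↑T : Set (EuclideanSpace ℝ (Fin d))) ⊆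
      convexHull ℝ (↑P : Set (EuclideanSpace ℝ (Fin d))))
    (hOP : (↑O : Set (EuclideanSpace ℝ (Fin d))) ⊆
      convexHull ℝ (↑P : Set (EuclideanSpace ℝ (Fin d))))
    (ε : ℝ)
    (hOapprox : ∀ p ∈ P,
      Metric.infDist p (convexHull ℝ (↑O : Set (EuclideanSpace ℝ (Fin d)))) ≤ ε)
    (r : ℝ)
    (hr : r = P.sup' hP fun p =>
      Metric.infDist p (convexHull ℝ (↑T : Set (EuclideanSpace ℝ (Fin d))))) :
    (∃ o ∈ O, r - ε ≤
        Metric.infDist o (convexHull ℝ (↑T : Set (EuclideanSpace ℝ (Fin d)))) ∧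
        Metric.infDist o (convexHull ℝ (↑T : Set (EuclideanSpace ℝ (Fin d)))) ≤ r) ∧
    ∀ o ∈ O,
      Metric.infDist o (convexHull ℝ (↑T : Set (EuclideanSpace ℝ (Fin d)))) ≤ r := by
  set CT := convexHull ℝ (↑T : Set (EuclideanSpace ℝ (Fin d))) with hCT
  have hCTne : CT.Nonempty := hT.to_set.convexHull
  have hCTcomp : IsCompact CT := T.finite_toSet.isCompact_convexHull ℝ
  have hconv : ConvexOn ℝ Set.univ (fun x => Metric.infDist x CT) :=
    convexOn_infDist_aux (convex_convexHull ℝ _) hCTcomp hCTne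
  -- any point of conv P has infDist ≤ r
  have hkey : ∀ x ∈ convexHull ℝ (↑P : Set (EuclideanSpace ℝ (Fin d))),
      Metric.infDist x CT ≤ r := by
    intro x hx
    obtain ⟨p, hp, hle⟩ := hconv.exists_ge_of_mem_convexHull
      (Set.subset_univ _) hx
    rw [hr]; exact hle.trans (Finset.le_sup' (fun p => Metric.infDist p CT) hp)
  have hall : ∀ o ∈ O, Metric.infDist o CT ≤ r := fun o ho =>
    hkey o (hOP ho)
  refine ⟨?_, hall⟩
  -- pick p₀ attaining r
  obtain ⟨p₀, hp₀, hp₀r⟩ := Finset.exists_mem_eq_sup' hP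
    (fun p => Metric.infDist p CT)
  have hr' : r = Metric.infDist p₀ CT := hr.trans hp₀r
  -- point y in conv O closest to p₀
  have hCOcomp : IsCompact (convexHull ℝ (↑O : Set (EuclideanSpace ℝ (Fin d)))) :=
    O.finite_toSet.isCompact_convexHull ℝ
  have hCOne : (convexHull ℝ (↑O : Set (EuclideanSpace ℝ (Fin d)))).Nonempty :=
    hO.to_set.convexHull
  obtain ⟨y, hy, hdy⟩ := hCOcomp.exists_infDist_eq_dist hCOne p₀
  have hdyε : dist p₀ y ≤ ε := by
    rw [← hdy]; exact hOapprox p₀ hp₀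
  have hylow : r - ε ≤ Metric.infDist y CT := by
    have := Metric.infDist_le_infDist_add_dist (x := p₀) (y := y) (s := CT)
    rw [← hr'] at this
    have : r - dist p₀ y ≤ Metric.infDist y CT := by linarith
    linarith
  obtain ⟨o, ho, hle⟩ := hconv.exists_ge_of_mem_convexHull (Set.subset_univ _) hy
  exact ⟨o, ho, hylow.trans hle, hall o ho⟩
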